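/- arXiv:1204.2282 — 2 statements merged into one kernel-verified Lean document; each statement's English description precedes it below -/
import Mathlib

section
/- For all integers $m \geq 0$, $j \geq 0$ and real $\alpha$, the two representations of the type II exceptional Laguerre polynomial agree: $z\, L^{-\alpha-1}_m(z)\, L^{\alpha+2}_{j-1}(z) + (m-\alpha-1)\, L^{-\alpha-2}_m(z)\, L^{\alpha+1}_j(z) = -z\, L^{-\alpha}_{m-1}(z)\, L^{\alpha+1}_j(z) - (\alpha+1+j)\, L^{-\alpha-1}_m(z)\, L^{\alpha}_j(z)$. -/
noncomputable def gbinom (x : ℝ) (k : ℕ) : ℝ :=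
  (∏ i ∈ Finset.range k, (x - i)) / (Nat.factorial k)

noncomputable def poch (x : ℝ) (k : ℕ) : ℝ := ∏ i ∈ Finset.range k, (x + i)

lemma gbinom_zero (x : ℝ) : gbinom x 0 = 1 := by simp [gbinom]

lemma gbinom_succ (x : ℝ) (r : ℕ) :
    ((r : ℝ) + 1) * gbinom x (r + 1) = x * gbinom (x - 1) r := by
  have h : ∏ i ∈ Finset.range (r+1), (x - i)
      = (∏ i ∈ Finset.range r, (x - 1 - i)) * x := by
    rw [Finset.prod_range_succ']
    simp only [Nat.cast_add, Nat.cast_one, Nat.cast_zero]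
    congr 1
    · exact Finset.prod_congr rfl (fun i _ => by ring)
    · ring
  have hf : ((r.factorial : ℝ)) ≠ 0 := Nat.cast_ne_zero.2 r.factorial_ne_zero
  have hf1 : (((r+1).factorial : ℝ)) ≠ 0 := Nat.cast_ne_zero.2 (r+1).factorial_ne_zero
  rw [gbinom, gbinom, h, Nat.factorial_succ]
  push_cast
  field_simp

lemma gbinom_pascal (x : ℝ) (r : ℕ) :
    gbinom (x + 1) (r + 1) = gbinom x (r + 1) + gbinom x r := by
  have h1 : ∏ i ∈ Finset.range (r+1), (x + 1 - i)
      = (∏ i ∈ Finset.range r, (x - i)) * (x + 1) := by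
    rw [Finset.prod_range_succ']
    congr 1
    · exact Finset.prod_congr rfl (fun i _ => by push_cast; ring)
    · push_cast; ring
  have h2 : ∏ i ∈ Finset.range (r+1), (x - i)
      = (∏ i ∈ Finset.range r, (x - i)) * (x - r) := Finset.prod_range_succ _ _
  have hf : ((r.factorial : ℝ)) ≠ 0 := Nat.cast_ne_zero.2 r.factorial_ne_zero
  have hf1 : (((r+1).factorial : ℝ)) ≠ 0 := Nat.cast_ne_zero.2 (r+1).factorial_ne_zero
  rw [gbinom, gbinom, gbinom, h1, h2, Nat.factorial_succ]
  push_cast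
  field_simp
  ring

/-- Classical (associated) Laguerre polynomial `L^α_n(x)`, with `L^α_n = 0` for `n < 0`. -/
noncomputable def lag (α : ℝ) (n : ℤ) (x : ℝ) : ℝ :=
  if n < 0 then 0 else
    ∑ k ∈ Finset.range (n.toNat + 1),
      (-1 : ℝ) ^ k * gbinom ((n : ℝ) + α) (n.toNat - k) * x ^ k / (Nat.factorial k)


noncomputable def lagN (α : ℝ) (n : ℕ) (x : ℝ) : ℝ :=
  ∑ k ∈ Finset.range (n + 1),
    (-1 : ℝ) ^ k * gbinom ((n : ℝ) + α) (n - k) * x ^ k / (Nat.factorial k)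

lemma lag_natCast (α : ℝ) (n : ℕ) (x : ℝ) : lag α (n : ℤ) x = lagN α n x := by
  rw [lag, if_neg (by exact_mod_cast Int.not_lt.2 (Int.natCast_nonneg n))]
  simp [lagN]

lemma lag_neg_one (α : ℝ) (x : ℝ) : lag α (-1) x = 0 := by
  rw [lag, if_pos (by norm_num)]

lemma lagN_zero (α x : ℝ) : lagN α 0 x = 1 := by
  simp [lagN, gbinom_zero]

lemma R1N (β x : ℝ) (n : ℕ) :
    lagN β (n+1) x = lagN (β+1) (n+1) x - lagN (β+1) n x := by
  unfold lagN
  rw [Finset.sum_range_succ, Finset.sum_range_succ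
    (f := fun k => (-1 : ℝ) ^ k * gbinom (((n:ℕ)+1 : ℕ) + (β+1)) ((n+1) - k) * x ^ k / (Nat.factorial k))]
  have htop : (-1 : ℝ) ^ (n+1) * gbinom (((n:ℕ)+1 : ℕ) + β) ((n+1) - (n+1)) * x ^ (n+1) / (Nat.factorial (n+1))
      = (-1 : ℝ) ^ (n+1) * gbinom (((n:ℕ)+1 : ℕ) + (β+1)) ((n+1) - (n+1)) * x ^ (n+1) / (Nat.factorial (n+1)) := by
    simp [Nat.sub_self, gbinom_zero]
  have hmain : ∑ k ∈ Finset.range (n+1),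
        (-1 : ℝ) ^ k * gbinom (((n:ℕ)+1 : ℕ) + (β+1)) ((n+1) - k) * x ^ k / (Nat.factorial k)
      = ∑ k ∈ Finset.range (n+1),
          ((-1 : ℝ) ^ k * gbinom (((n:ℕ)+1 : ℕ) + β) ((n+1) - k) * x ^ k / (Nat.factorial k)
            + (-1 : ℝ) ^ k * gbinom ((n:ℕ) + (β+1)) (n - k) * x ^ k / (Nat.factorial k)) := by
    refine Finset.sum_congr rfl (fun k hk => ?_)
    have hk' : k ≤ n := Nat.lt_succ_iff.1 (Finset.mem_range.1 hk)
    have hsub : (n+1) - k = (n - k) + 1 := by omega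
    have harg : ((((n:ℕ)+1 : ℕ)) : ℝ) + (β+1) = ((n:ℕ) : ℝ) + (β+1) + 1 := by push_cast; ring
    have harg2 : (((n:ℕ)+1 : ℕ) : ℝ) + β = ((n:ℕ) : ℝ) + (β+1) := by push_cast; ring
    rw [hsub, harg, harg2, gbinom_pascal]
    ring
  rw [hmain, Finset.sum_add_distrib, htop]
  ring

lemma R2N (β z : ℝ) (n : ℕ) :
    z * lagN (β+1) n z + ((n:ℝ)+1) * lagN β (n+1) z = ((n:ℝ)+1+β) * lagN β n z := by
  unfold lagN
  rw [Finset.mul_sum, Finset.mul_sum, Finset.mul_sum]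
  rw [Finset.sum_range_succ'
    (f := fun k => ((n:ℝ)+1) * ((-1:ℝ)^k * gbinom ((((n:ℕ)+1:ℕ):ℝ)+β) ((n+1)-k) * z^k / (Nat.factorial k))) (n+1)]
  rw [Finset.sum_range_succ'
    (f := fun k => ((n:ℝ)+1+β) * ((-1:ℝ)^k * gbinom (((n:ℕ):ℝ)+β) (n-k) * z^k / (Nat.factorial k))) n]
  have a2 : ((((n:ℕ)+1:ℕ)):ℝ) + β = ((n:ℕ):ℝ) + β + 1 := by push_cast; ring
  have a1 : ((n:ℕ):ℝ) + (β+1) = ((n:ℕ):ℝ) + β + 1 := by ring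
  have a3 : ((n:ℕ):ℝ) + β + 1 - 1 = ((n:ℕ):ℝ) + β := by ring
  have hconst : ((n:ℝ)+1) * ((-1:ℝ)^0 * gbinom (((((n:ℕ)+1:ℕ)):ℝ) + β) ((n+1)-0) * z^0 / (Nat.factorial 0))
      = ((n:ℝ)+1+β) * ((-1:ℝ)^0 * gbinom (((n:ℕ):ℝ)+β) (n-0) * z^0 / (Nat.factorial 0)) := by
    have hg := gbinom_succ (((n:ℕ):ℝ) + β + 1) n
    rw [a3] at hg
    simp only [a2, pow_zero, one_mul, Nat.sub_zero, Nat.factorial_zero, Nat.cast_one, div_one,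
      pow_zero, Nat.add_sub_cancel]
    linear_combination hg
  rw [← add_assoc, ← Finset.sum_add_distrib, Finset.sum_range_succ, hconst]
  have htop : z * ((-1:ℝ)^n * gbinom (((n:ℕ):ℝ)+(β+1)) (n-n) * z^n / (Nat.factorial n))
      + ((n:ℝ)+1) * ((-1:ℝ)^(n+1) * gbinom ((((n:ℕ)+1:ℕ):ℝ)+β) ((n+1)-(n+1)) * z^(n+1) / (Nat.factorial (n+1)))
      = 0 := by
    have hfact : (((n+1).factorial : ℕ) : ℝ) = ((n:ℝ)+1) * (n.factorial) := by
      rw [Nat.factorial_succ]; push_cast; ring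
    have h0 : ((n.factorial : ℕ) : ℝ) ≠ 0 := Nat.cast_ne_zero.2 n.factorial_ne_zero
    simp only [Nat.sub_self, gbinom_zero, hfact]
    field_simp
    ring
  have hterm : ∀ k ∈ Finset.range n,
      z * ((-1:ℝ)^k * gbinom (((n:ℕ):ℝ)+(β+1)) (n-k) * z^k / (Nat.factorial k))
        + ((n:ℝ)+1) * ((-1:ℝ)^(k+1) * gbinom ((((n:ℕ)+1:ℕ):ℝ)+β) ((n+1)-(k+1)) * z^(k+1) / (Nat.factorial (k+1)))
      = ((n:ℝ)+1+β) * ((-1:ℝ)^(k+1) * gbinom (((n:ℕ):ℝ)+β) (n-(k+1)) * z^(k+1) / (Nat.factorial (k+1))) := by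
    intro k hk
    have hkn : k < n := Finset.mem_range.1 hk
    set r : ℕ := n - 1 - k with hrdef
    have hr1 : n - k = r + 1 := by omega
    have hr2 : n - (k+1) = r := by omega
    have hr3 : (n+1) - (k+1) = r + 1 := by omega
    have hcast : ((r : ℕ) : ℝ) = (n:ℝ) - (k:ℝ) - 1 := by
      have : r + k + 1 = n := by omega
      have := congrArg (fun t : ℕ => (t : ℝ)) this
      push_cast at this
      linarith
    have hg := gbinom_succ (((n:ℕ):ℝ) + β + 1) r
    rw [a3, hcast] at hg
    have hfact : (((k+1).factorial : ℕ) : ℝ) = ((k:ℝ)+1) * (k.factorial) := by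
      rw [Nat.factorial_succ]; push_cast; ring
    have h0 : ((k.factorial : ℕ) : ℝ) ≠ 0 := Nat.cast_ne_zero.2 k.factorial_ne_zero
    have h1 : ((k:ℝ)+1) ≠ 0 := by positivity
    rw [hr1, hr2, hr3, a1, a2, hfact]
    have key : ((n:ℝ)-(k:ℝ)) * gbinom (((n:ℕ):ℝ)+β+1) (r+1) = (((n:ℕ):ℝ)+β+1) * gbinom (((n:ℕ):ℝ)+β) r := by
      linear_combination hg
    field_simp
    linear_combination (-(z^(k+1) * (-1:ℝ)^k)) * key
  rw [Finset.sum_congr rfl hterm, htop]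
  ring

lemma lagR1 (β x : ℝ) (n : ℕ) :
    lag β (n : ℤ) x = lag (β+1) (n : ℤ) x - lag (β+1) ((n:ℤ)-1) x := by
  cases n with
  | zero =>
    show lag β ((0:ℕ):ℤ) x = lag (β+1) ((0:ℕ):ℤ) x - lag (β+1) (((0:ℕ):ℤ)-1) x
    rw [lag_natCast, lag_natCast, show (((0:ℕ):ℤ)-1) = (-1:ℤ) by norm_num, lag_neg_one,
      lagN_zero, lagN_zero]
    ring
  | succ n =>
    have h : (((n+1:ℕ)):ℤ) - 1 = (n:ℤ) := by push_cast; ring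
    rw [h, lag_natCast, lag_natCast, lag_natCast, R1N]

lemma lagR2 (β z : ℝ) (n : ℕ) :
    z * lag (β+1) ((n:ℤ)-1) z = ((n:ℝ)+β) * lag β ((n:ℤ)-1) z - (n:ℝ) * lag β (n : ℤ) z := by
  cases n with
  | zero =>
    rw [show ((0:ℕ):ℤ)-1 = (-1 : ℤ) by norm_num, lag_neg_one, lag_neg_one]
    norm_num
  | succ n =>
    have h : (((n+1:ℕ)):ℤ) - 1 = (n:ℤ) := by push_cast; ring
    rw [h, lag_natCast, lag_natCast, lag_natCast]
    have := R2N β z n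
    push_cast
    linarith [R2N β z n]

/-- The two representations of the type II exceptional Laguerre polynomial agree. -/
theorem xLaguerreII_dual_rep (m j : ℕ) (α z : ℝ) :
    z * lag (-α - 1) m z * lag (α + 2) ((j : ℤ) - 1) z
        + ((m : ℝ) - α - 1) * lag (-α - 2) m z * lag (α + 1) j z =
      -(z * lag (-α) ((m : ℤ) - 1) z * lag (α + 1) j z)
        - (α + 1 + j) * lag (-α - 1) m z * lag α j z := by
  have hB := lagR2 (α+1) z j
  rw [show (α+1)+1 = α+2 by ring] at hB
  have hA := lagR2 (-α-1) z m
  rw [show (-α-1)+1 = -α by ring] at hA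
  have hB0 := lagR1 α z j
  have hA2 := lagR1 (-α-2) z m
  rw [show (-α-2)+1 = -α-1 by ring] at hA2
  linear_combination lag (-α-1) (m:ℤ) z * hB + lag (α+1) (j:ℤ) z * hA
    + (α+1+(j:ℝ)) * lag (-α-1) (m:ℤ) z * hB0 + ((m:ℝ)-α-1) * lag (α+1) (j:ℤ) z * hA2
end

section
/- For fixed integer $m \geq 0$ and real $\alpha > -1$, as $n \to \infty$ (with $n = m+j$), $n^{-\alpha-1}\, \hat{L}^{II,\alpha}_{m,n}(z/n)$ converges uniformly on compact subsets of $\mathbb{C}$ to $-\binom{m-1-\alpha}{m}\, z^{-\alpha/2} J_{\alpha}(2\sqrt{z})$. -/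
noncomputable def gbinomC (x : ℂ) (k : ℕ) : ℂ :=
  (∏ i ∈ Finset.range k, (x - i)) / (Nat.factorial k)

/-- Classical (associated) Laguerre polynomial over `ℂ`, with value `0` for `n < 0`. -/
noncomputable def lagC (α : ℂ) (n : ℤ) (x : ℂ) : ℂ :=
  if n < 0 then 0 else
    ∑ k ∈ Finset.range (n.toNat + 1),
      (-1 : ℂ) ^ k * gbinomC ((n : ℂ) + α) (n.toNat - k) * x ^ k / (Nat.factorial k)

/-- The entire function `z ↦ z^{-α/2} J_α(2√z)`, where `J_α` is the Bessel function
of the first kind of order `α`. -/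
noncomputable def besselEntire (α : ℂ) (z : ℂ) : ℂ :=
  ∑' k : ℕ, (-1 : ℂ) ^ k * z ^ k / ((Nat.factorial k : ℂ) * Complex.Gamma (α + k + 1))

/-- Type II exceptional `X_m`-Laguerre polynomial over `ℂ`. -/
noncomputable def XLagIIC (α : ℂ) (m j : ℤ) (x : ℂ) : ℂ :=
  x * lagC (-α - 1) m x * lagC (α + 2) (j - 1) x
    + ((m : ℂ) - α - 1) * lagC (-α - 2) m x * lagC (α + 1) j x

open Filter Finset Topology

lemma tuo_of_eq {F : ℕ → ℂ → ℂ} {f : ℂ → ℂ} {s : Set ℂ}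
    (h : ∀ j, ∀ z ∈ s, F j z = f z) : TendstoUniformlyOn F f atTop s := by
  rw [Metric.tendstoUniformlyOn_iff]
  intro ε hε
  filter_upwards with j z hz
  rw [h j z hz]
  simpa using hε

lemma tuo_mul_of_bound {F G : ℕ → ℂ → ℂ} {f g : ℂ → ℂ} {s : Set ℂ}
    (hF : TendstoUniformlyOn F f atTop s) (hG : TendstoUniformlyOn G g atTop s)
    {Cf Cg : ℝ} (hf : ∀ z ∈ s, ‖f z‖ ≤ Cf) (hg : ∀ z ∈ s, ‖g z‖ ≤ Cg) :
    TendstoUniformlyOn (fun j z => F j z * G j z) (fun z => f z * g z) atTop s := by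
  rw [Metric.tendstoUniformlyOn_iff] at hF hG ⊢
  intro ε hε
  obtain ⟨M, hM0, hCf, hCg⟩ : ∃ M : ℝ, 0 < M ∧ Cf + 1 ≤ M ∧ Cg ≤ M := by
    refine ⟨max Cf (max Cg 0) + 1, ?_, ?_, ?_⟩
    · have : (0:ℝ) ≤ max Cf (max Cg 0) := le_max_of_le_right (le_max_right _ _)
      linarith
    · have : Cf ≤ max Cf (max Cg 0) := le_max_left _ _
      linarith
    · have : Cg ≤ max Cf (max Cg 0) := le_max_of_le_right (le_max_left _ _)
      linarith
  obtain ⟨δ, hδ0, hδ1, hδ3⟩ : ∃ δ : ℝ, 0 < δ ∧ δ ≤ 1 ∧ δ * M ≤ ε / 3 := by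
    refine ⟨min 1 (ε / (3 * M)), lt_min one_pos (by positivity), min_le_left _ _, ?_⟩
    calc min 1 (ε / (3 * M)) * M ≤ (ε / (3 * M)) * M := by
          exact mul_le_mul_of_nonneg_right (min_le_right _ _) hM0.le
      _ = ε / 3 := by field_simp
  filter_upwards [hF _ hδ0, hG _ hδ0] with j hj1 hj2 z hz
  have h1 : ‖f z - F j z‖ < δ := by rw [← dist_eq_norm]; exact hj1 z hz
  have h2 : ‖g z - G j z‖ < δ := by rw [← dist_eq_norm]; exact hj2 z hz
  have hFz : ‖F j z‖ ≤ M := by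
    have h4 : ‖F j z‖ - ‖f z‖ ≤ ‖f z - F j z‖ := by
      have := norm_sub_norm_le (F j z) (f z)
      rwa [norm_sub_rev] at this
    have := hf z hz
    linarith
  have hgz : ‖g z‖ ≤ M := le_trans (hg z hz) hCg
  rw [dist_eq_norm]
  have e : f z * g z - F j z * G j z = (f z - F j z) * g z + F j z * (g z - G j z) := by ring
  rw [e]
  calc ‖(f z - F j z) * g z + F j z * (g z - G j z)‖
      ≤ ‖(f z - F j z) * g z‖ + ‖F j z * (g z - G j z)‖ := norm_add_le _ _
    _ = ‖f z - F j z‖ * ‖g z‖ + ‖F j z‖ * ‖g z - G j z‖ := by rw [norm_mul, norm_mul]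
    _ ≤ δ * M + M * δ :=
        add_le_add (mul_le_mul h1.le hgz (norm_nonneg _) hδ0.le)
          (mul_le_mul hFz h2.le (norm_nonneg _) hM0.le)
    _ < ε := by nlinarith

lemma tannery_uniform {c : ℕ → ℕ → ℂ} {a : ℕ → ℂ} {D : ℕ → ℝ} {R : ℝ} (hR : 0 ≤ R)
    (hc : ∀ k, Tendsto (fun j => c j k) atTop (𝓝 (a k)))
    (hb : ∀ j k, ‖c j k‖ ≤ D k)
    (hD : Summable (fun k => D k * R ^ k)) :
    TendstoUniformlyOn (fun j z => ∑' k, c j k * z ^ k)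
      (fun z => ∑' k, a k * z ^ k) atTop (Metric.closedBall 0 R) := by
  have hD0 : ∀ k, 0 ≤ D k := fun k => le_trans (norm_nonneg _) (hb 0 k)
  have ha : ∀ k, ‖a k‖ ≤ D k := fun k =>
    le_of_tendsto (hc k).norm (Filter.Eventually.of_forall fun j => hb j k)
  have hbound : ∀ (b : ℕ → ℂ), (∀ k, ‖b k‖ ≤ D k) → ∀ z : ℂ, ‖z‖ ≤ R →
      ∀ k, ‖b k * z ^ k‖ ≤ D k * R ^ k := by
    intro b hbk z hz k
    rw [norm_mul, norm_pow]
    have h1 : ‖z‖ ^ k ≤ R ^ k := pow_le_pow_left₀ (norm_nonneg z) hz k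
    exact mul_le_mul (hbk k) h1 (by positivity) (hD0 k)
  have hsum : ∀ (b : ℕ → ℂ), (∀ k, ‖b k‖ ≤ D k) → ∀ z : ℂ, ‖z‖ ≤ R →
      Summable (fun k => b k * z ^ k) := fun b hbk z hz =>
    Summable.of_norm_bounded hD (hbound b hbk z hz)
  rw [Metric.tendstoUniformlyOn_iff]
  intro ε hε
  -- choose the tail cutoff
  have htail : Tendsto (fun K₀ => ∑' k, D (k + K₀) * R ^ (k + K₀)) atTop (𝓝 0) :=
    tendsto_sum_nat_add (fun k => D k * R ^ k)
  obtain ⟨K₀, hK₀⟩ := (htail.eventually (gt_mem_nhds (show (0:ℝ) < ε/4 by positivity))).exists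
  -- the finite part is eventually small
  have hfin : Tendsto (fun j => ∑ k ∈ Finset.range K₀, ‖a k - c j k‖ * R ^ k) atTop (𝓝 0) := by
    have : Tendsto (fun j => ∑ k ∈ Finset.range K₀, ‖a k - c j k‖ * R ^ k) atTop
        (𝓝 (∑ k ∈ Finset.range K₀, ‖a k - a k‖ * R ^ k)) := by
      apply tendsto_finset_sum
      intro k _
      exact (((hc k).const_sub (a k)).norm.mul_const _)
    simpa using this
  filter_upwards [hfin.eventually (gt_mem_nhds (show (0:ℝ) < ε/4 by positivity))] with j hj z hz
  simp only [Metric.mem_closedBall, dist_zero_right] at hz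
  rw [dist_eq_norm]
  have hsa := hsum a ha z hz
  have hsc := hsum (c j) (hb j) z hz
  have hdiff : (∑' k, a k * z ^ k) - (∑' k, c j k * z ^ k)
      = ∑' k, (a k - c j k) * z ^ k := by
    rw [← Summable.tsum_sub hsa hsc]
    congr 1; ext k; ring
  rw [hdiff]
  have hs2 : Summable (fun k => (2 * D k) * R ^ k) := by
    simpa [mul_assoc] using hD.mul_left 2
  have hnormsum : Summable (fun k => ‖(a k - c j k) * z ^ k‖) := by
    refine Summable.of_nonneg_of_le (fun k => norm_nonneg _) (fun k => ?_) hs2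
    rw [norm_mul, norm_pow]
    have h1 : ‖z‖ ^ k ≤ R ^ k := pow_le_pow_left₀ (norm_nonneg z) hz k
    have h2 : ‖a k - c j k‖ ≤ 2 * D k := by
      calc ‖a k - c j k‖ ≤ ‖a k‖ + ‖c j k‖ := norm_sub_le _ _
        _ ≤ 2 * D k := by have := ha k; have := hb j k; linarith
    exact mul_le_mul h2 h1 (pow_nonneg (norm_nonneg z) k) (by have := hD0 k; linarith)
  calc ‖∑' k, (a k - c j k) * z ^ k‖
      ≤ ∑' k, ‖(a k - c j k) * z ^ k‖ := norm_tsum_le_tsum_norm hnormsum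
    _ = (∑ k ∈ Finset.range K₀, ‖(a k - c j k) * z ^ k‖)
        + ∑' k, ‖(a (k + K₀) - c j (k + K₀)) * z ^ (k + K₀)‖ := by
        rw [← Summable.sum_add_tsum_nat_add K₀ hnormsum]
    _ ≤ (∑ k ∈ Finset.range K₀, ‖a k - c j k‖ * R ^ k)
        + ∑' k, (2 * D (k + K₀)) * R ^ (k + K₀) := by
        apply add_le_add
        · apply Finset.sum_le_sum
          intro k _
          rw [norm_mul, norm_pow]
          have h1 : ‖z‖ ^ k ≤ R ^ k := pow_le_pow_left₀ (norm_nonneg z) hz k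
          exact mul_le_mul_of_nonneg_left h1 (norm_nonneg _)
        · apply Summable.tsum_le_tsum _
            ((summable_nat_add_iff (f := fun m => ‖(a m - c j m) * z ^ m‖) K₀).2 hnormsum)
            ((summable_nat_add_iff (f := fun m => (2 * D m) * R ^ m) K₀).2 hs2)
          intro k
          rw [norm_mul, norm_pow]
          have h1 : ‖z‖ ^ (k + K₀) ≤ R ^ (k + K₀) := pow_le_pow_left₀ (norm_nonneg z) hz _
          have h2 : ‖a (k + K₀) - c j (k + K₀)‖ ≤ 2 * D (k + K₀) := by
            calc ‖a (k+K₀) - c j (k+K₀)‖ ≤ ‖a (k+K₀)‖ + ‖c j (k+K₀)‖ := norm_sub_le _ _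
              _ ≤ 2 * D (k+K₀) := by have := ha (k+K₀); have := hb j (k+K₀); linarith
          exact mul_le_mul h2 h1 (pow_nonneg (norm_nonneg z) _) (by have := hD0 (k+K₀); linarith)
    _ < ε := by
        have e1 : ∑' k, (2 * D (k + K₀)) * R ^ (k + K₀)
            = 2 * ∑' k, D (k + K₀) * R ^ (k + K₀) := by
          rw [← tsum_mul_left]; congr 1; ext k; ring
        rw [e1]
        linarith


lemma gamma_lb (γ : ℝ) (hγ : 0 < γ) (k : ℕ) :
    Real.Gamma γ * (min 1 γ) ^ k * (Nat.factorial k : ℝ) ≤ Real.Gamma (γ + k) := by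
  induction k with
  | zero => simp
  | succ k ih =>
    have h1 : (0:ℝ) < min 1 γ := lt_min one_pos hγ
    have h2 : min 1 γ * (k + 1) ≤ γ + k := by
      have l1 : min 1 γ ≤ 1 := min_le_left _ _
      have l2 : min 1 γ ≤ γ := min_le_right _ _
      nlinarith
    have h3 : (γ + (k:ℝ)) ≠ 0 := by positivity
    have h4 : Real.Gamma (γ + ((k:ℕ)+1:ℕ)) = (γ + k) * Real.Gamma (γ + k) := by
      push_cast
      rw [show γ + ((k:ℝ) + 1) = (γ + k) + 1 by ring, Real.Gamma_add_one h3]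
    rw [h4]
    have h5 : (0:ℝ) < Real.Gamma γ := Real.Gamma_pos_of_pos hγ
    have h6 : Real.Gamma γ * (min 1 γ)^k * (k.factorial:ℝ) ≥ 0 := by positivity
    calc Real.Gamma γ * (min 1 γ) ^ (k+1) * ((k+1).factorial : ℝ)
        = (min 1 γ * (k+1)) * (Real.Gamma γ * (min 1 γ)^k * (k.factorial:ℝ)) := by
          rw [Nat.factorial_succ]; push_cast; ring
      _ ≤ (γ + k) * Real.Gamma (γ + k) := by
          apply mul_le_mul h2 ih h6
          positivity
  
lemma gamma_pos_k (a : ℝ) (ha : -1 < a) (k : ℕ) : 0 < Real.Gamma (a + k + 1) :=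
  Real.Gamma_pos_of_pos (by have : (0:ℝ) ≤ k := Nat.cast_nonneg k; linarith)

lemma gammaC_eq (a : ℝ) (k : ℕ) :
    Complex.Gamma ((a:ℂ) + k + 1) = ((Real.Gamma (a + k + 1) : ℝ) : ℂ) := by
  rw [show ((a:ℂ) + k + 1) = (((a + k + 1 : ℝ)) : ℂ) by push_cast; ring, Complex.Gamma_ofReal]

lemma gammaC_ne (a : ℝ) (ha : -1 < a) (k : ℕ) : Complex.Gamma ((a:ℂ) + k + 1) ≠ 0 := by
  rw [gammaC_eq]
  exact_mod_cast (gamma_pos_k a ha k).ne'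

lemma bessel_term_norm (a : ℝ) (ha : -1 < a) (k : ℕ) (z : ℂ) :
    ‖(-1 : ℂ) ^ k * z ^ k / ((Nat.factorial k : ℂ) * Complex.Gamma ((a:ℂ) + k + 1))‖
      = ‖z‖ ^ k / ((Nat.factorial k : ℝ) * Real.Gamma (a + k + 1)) := by
  rw [gammaC_eq, norm_div, norm_mul, norm_mul, norm_pow, norm_pow]
  have h1 : (0:ℝ) < Real.Gamma (a + k + 1) := gamma_pos_k a ha k
  simp [Complex.norm_real, abs_of_pos h1, Complex.norm_natCast]

lemma bessel_term_bound (a : ℝ) (ha : -1 < a) (k : ℕ) (z : ℂ) (R : ℝ) (hz : ‖z‖ ≤ R) :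
    ‖(-1 : ℂ) ^ k * z ^ k / ((Nat.factorial k : ℂ) * Complex.Gamma ((a:ℂ) + k + 1))‖
      ≤ (1 / Real.Gamma (a + 1)) * ((R / min 1 (a + 1)) ^ k / (Nat.factorial k : ℝ)) := by
  have hc : (0:ℝ) < min 1 (a + 1) := lt_min one_pos (by linarith)
  have hR0 : 0 ≤ R := le_trans (norm_nonneg z) hz
  have hG1 : (0:ℝ) < Real.Gamma (a + 1) := Real.Gamma_pos_of_pos (by linarith)
  have hGk : (0:ℝ) < Real.Gamma (a + k + 1) := gamma_pos_k a ha k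
  rw [bessel_term_norm a ha k z]
  have hlb : Real.Gamma (a+1) * (min 1 (a+1)) ^ k * (Nat.factorial k : ℝ)
      ≤ Real.Gamma (a + k + 1) := by
    have := gamma_lb (a+1) (by linarith) k
    rwa [show a + 1 + (k:ℝ) = a + k + 1 by ring] at this
  have hfac : (1:ℝ) ≤ (Nat.factorial k : ℝ) := by exact_mod_cast Nat.one_le_iff_ne_zero.2 k.factorial_ne_zero
  have key : ‖z‖ ^ k / ((Nat.factorial k : ℝ) * Real.Gamma (a + k + 1))
      ≤ R ^ k / ((Nat.factorial k : ℝ) * (Real.Gamma (a+1) * (min 1 (a+1)) ^ k * (Nat.factorial k : ℝ))) := by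
    apply div_le_div₀ (by positivity) (pow_le_pow_left₀ (norm_nonneg z) hz k) (by positivity)
    apply mul_le_mul_of_nonneg_left hlb (by positivity)
  refine key.trans ?_
  have htgt : (1 / Real.Gamma (a+1)) * ((R / min 1 (a+1)) ^ k / (Nat.factorial k : ℝ))
      = R ^ k / (Real.Gamma (a+1) * (min 1 (a+1)) ^ k * (Nat.factorial k : ℝ)) := by
    rw [div_pow, one_div, inv_mul_eq_div, div_div, div_div]
    congr 1
    ring
  rw [htgt]
  have hd : Real.Gamma (a+1) * (min 1 (a+1))^k * (Nat.factorial k:ℝ)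
      ≤ (Nat.factorial k:ℝ) * (Real.Gamma (a+1) * (min 1 (a+1))^k * (Nat.factorial k:ℝ)) :=
    le_mul_of_one_le_left (by positivity) hfac
  exact div_le_div_of_nonneg_left (by positivity) (by positivity) hd

lemma besselSummable (a : ℝ) (ha : -1 < a) (z : ℂ) :
    Summable (fun k : ℕ => (-1 : ℂ) ^ k * z ^ k / ((Nat.factorial k : ℂ) * Complex.Gamma ((a:ℂ) + k + 1))) := by
  apply Summable.of_norm_bounded
    (g := fun k => (1 / Real.Gamma (a + 1)) * ((‖z‖ / min 1 (a + 1)) ^ k / (Nat.factorial k : ℝ)))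
  · exact ((Real.summable_pow_div_factorial _).mul_left _)
  · intro k
    exact bessel_term_bound a ha k z ‖z‖ le_rfl

noncomputable def besselCoef (a : ℝ) (k : ℕ) : ℂ :=
  (-1 : ℂ) ^ k / ((Nat.factorial k : ℂ) * Complex.Gamma ((a:ℂ) + k + 1))

lemma besselEntire_eq (a : ℝ) (z : ℂ) :
    besselEntire (a:ℂ) z = ∑' k, besselCoef a k * z ^ k := by
  unfold besselEntire besselCoef
  exact tsum_congr fun k => by ring

lemma besselEntire_bound (a : ℝ) (ha : -1 < a) (R : ℝ) (hR : 0 ≤ R) :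
    ∃ C : ℝ, ∀ z : ℂ, ‖z‖ ≤ R → ‖besselEntire (a:ℂ) z‖ ≤ C := by
  refine ⟨∑' k : ℕ, (1 / Real.Gamma (a + 1)) * ((R / min 1 (a + 1)) ^ k / (Nat.factorial k : ℝ)), ?_⟩
  intro z hz
  unfold besselEntire
  have hsn : Summable (fun k : ℕ =>
      ‖(-1 : ℂ) ^ k * z ^ k / ((Nat.factorial k : ℂ) * Complex.Gamma ((a:ℂ) + k + 1))‖) := by
    apply Summable.of_nonneg_of_le (fun k => norm_nonneg _) (fun k => bessel_term_bound a ha k z R hz)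
    exact ((Real.summable_pow_div_factorial _).mul_left _)
  refine (norm_tsum_le_tsum_norm hsn).trans ?_
  apply Summable.tsum_le_tsum (fun k => bessel_term_bound a ha k z R hz) hsn
  exact ((Real.summable_pow_div_factorial _).mul_left _)

lemma bessel_rec (a : ℝ) (ha : -1 < a) (z : ℂ) :
    z * besselEntire ((a:ℂ) + 2) z
      = ((a:ℂ) + 1) * besselEntire ((a:ℂ) + 1) z - besselEntire (a:ℂ) z := by
  have e1 : ((a:ℂ) + 1) = (((a+1:ℝ)) : ℂ) := by push_cast; ring
  have e2 : ((a:ℂ) + 2) = (((a+2:ℝ)) : ℂ) := by push_cast; ring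
  have S0 := besselSummable a ha z
  have S1 := besselSummable (a+1) (by linarith) z
  have S2 := besselSummable (a+2) (by linarith) z
  set f0 : ℕ → ℂ := fun k => (-1 : ℂ) ^ k * z ^ k / ((Nat.factorial k : ℂ) * Complex.Gamma ((a:ℂ) + k + 1)) with hf0
  set f1 : ℕ → ℂ := fun k => (-1 : ℂ) ^ k * z ^ k / ((Nat.factorial k : ℂ) * Complex.Gamma (((a+1:ℝ):ℂ) + k + 1)) with hf1
  set f2 : ℕ → ℂ := fun k => (-1 : ℂ) ^ k * z ^ k / ((Nat.factorial k : ℂ) * Complex.Gamma (((a+2:ℝ):ℂ) + k + 1)) with hf2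
  set g : ℕ → ℂ := fun k => (-1 : ℂ) ^ k * z ^ k * (-(k:ℂ)) / ((Nat.factorial k : ℂ) * Complex.Gamma ((a:ℂ) + k + 2)) with hg
  have hpt : ∀ k, (((a+1:ℝ)):ℂ) * f1 k - f0 k = g k := by
    intro k
    have hGrec : Complex.Gamma ((a:ℂ) + k + 2) = ((a:ℂ) + k + 1) * Complex.Gamma ((a:ℂ) + k + 1) := by
      rw [show ((a:ℂ) + k + 2) = ((a:ℂ) + k + 1) + 1 by ring]
      apply Complex.Gamma_add_one
      rw [show ((a:ℂ) + k + 1) = (((a + k + 1 : ℝ)) : ℂ) by push_cast; ring]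
      refine Complex.ofReal_ne_zero.2 ?_
      have : (0:ℝ) ≤ (k:ℝ) := Nat.cast_nonneg k
      intro h; linarith [h]
    have hG0 : Complex.Gamma ((a:ℂ) + k + 1) ≠ 0 := gammaC_ne a ha k
    have hG1 : Complex.Gamma (((a+1:ℝ):ℂ) + k + 1) = Complex.Gamma ((a:ℂ) + k + 2) := by
      congr 1; push_cast; ring
    have hk : ((Nat.factorial k : ℂ)) ≠ 0 := by exact_mod_cast k.factorial_ne_zero
    have ha1 : ((a:ℂ) + k + 1) ≠ 0 := by
      rw [show ((a:ℂ) + k + 1) = (((a + k + 1 : ℝ)) : ℂ) by push_cast; ring]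
      refine Complex.ofReal_ne_zero.2 ?_
      have : (0:ℝ) ≤ (k:ℝ) := Nat.cast_nonneg k
      intro h; linarith [h]
    simp only [hf0, hf1, hg, hG1, hGrec]
    field_simp [hG0, hk, ha1]
    push_cast
    ring
  have hsg : Summable g := by
    have : Summable (fun k => (((a+1:ℝ)):ℂ) * f1 k - f0 k) := (S1.mul_left _).sub S0
    exact this.congr hpt
  have lhs_eq : (((a+1:ℝ)):ℂ) * besselEntire (((a+1:ℝ)):ℂ) z - besselEntire (a:ℂ) z = ∑' k, g k := by
    rw [besselEntire, besselEntire, ← tsum_mul_left, ← Summable.tsum_sub (S1.mul_left _) S0]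
    exact tsum_congr hpt
  have hg0 : g 0 = 0 := by simp [hg]
  have hshift : ∀ k : ℕ, g (k + 1) = z * f2 k := by
    intro k
    have hfac : ((Nat.factorial (k+1) : ℂ)) = ((k:ℂ)+1) * (Nat.factorial k : ℂ) := by
      rw [Nat.factorial_succ]; push_cast; ring
    have hG2 : Complex.Gamma (((a+2:ℝ):ℂ) + k + 1) = Complex.Gamma ((a:ℂ) + (k+1:ℕ) + 2) := by
      congr 1; push_cast; ring
    have hk1 : ((k:ℂ) + 1) ≠ 0 := by
      rw [show ((k:ℂ)+1) = (((k+1:ℕ)):ℂ) by push_cast; ring]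
      exact Nat.cast_ne_zero.2 (Nat.succ_ne_zero k)
    have hG0 : Complex.Gamma ((a:ℂ) + (k+1:ℕ) + 2) ≠ 0 := by
      rw [show ((a:ℂ) + (k+1:ℕ) + 2) = (((a+1:ℝ)):ℂ) + (k+1:ℕ) + 1 by push_cast; ring]
      exact gammaC_ne (a+1) (by linarith) (k+1)
    have hkf : ((Nat.factorial k : ℂ)) ≠ 0 := by exact_mod_cast k.factorial_ne_zero
    simp only [hg, hf2, hG2, hfac]
    push_cast
    have hG0' : Complex.Gamma ((a:ℂ) + ((k:ℂ)+1) + 2) ≠ 0 := by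
      rw [show ((a:ℂ) + ((k:ℂ)+1) + 2) = ((a:ℂ) + ((k+1:ℕ):ℂ) + 2) by push_cast; ring]
      exact hG0
    field_simp [hk1, hkf, hG0']
    ring
  have : ∑' k, g k = z * besselEntire (((a+2:ℝ)):ℂ) z := by
    rw [Summable.tsum_eq_zero_add hsg, hg0, zero_add]
    rw [besselEntire, ← tsum_mul_left]
    exact tsum_congr hshift
  rw [e1, e2, lhs_eq, this]


noncomputable def Qprod (β : ℝ) (d k : ℕ) : ℝ :=
  ∏ i ∈ Finset.range d, (β + ((k + 1 + i : ℕ) : ℝ))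

noncomputable def rA (β : ℝ) (m s j k : ℕ) : ℝ :=
  Qprod β (j - s - k) k /
    ((Nat.factorial (j - s - k) : ℝ) * ((m + j : ℕ) : ℝ) ^ β * ((m + j : ℕ) : ℝ) ^ k)

noncomputable def cA (β : ℝ) (m s : ℕ) (j k : ℕ) : ℂ :=
  if s + k ≤ j ∧ 1 ≤ m + j then
    (-1 : ℂ) ^ k * ((rA β m s j k : ℝ) : ℂ) / (Nat.factorial k : ℂ)
  else 0

lemma Qprod_pos (β : ℝ) (hβ : 0 < β) (d k : ℕ) : 0 < Qprod β d k := by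
  apply Finset.prod_pos
  intro i _
  positivity

lemma rA_nonneg (β : ℝ) (hβ : 0 < β) (m s j k : ℕ) : 0 ≤ rA β m s j k := by
  apply div_nonneg (Qprod_pos β hβ _ _).le
  positivity

lemma prod_reflect (β : ℝ) (N k : ℕ) (hk : k ≤ N) :
    ∏ i ∈ Finset.range (N - k), ((N : ℝ) + β - i) = Qprod β (N - k) k := by
  rw [Qprod, ← Finset.prod_range_reflect (fun i => β + ((k + 1 + i : ℕ) : ℝ)) (N - k)]
  apply Finset.prod_congr rfl
  intro i hi
  rw [Finset.mem_range] at hi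
  have h1 : k + 1 + (N - k - 1 - i) = N - i := by omega
  rw [h1, Nat.cast_sub (by omega : i ≤ N)]
  ring

lemma nat_fact_le (N n : ℕ) (hn : N ≤ n) :
    ∀ k, k ≤ N → Nat.factorial N ≤ Nat.factorial (N - k) * n ^ k := by
  intro k
  induction k with
  | zero => simp
  | succ k ih =>
    intro hk1
    have hk : k ≤ N := by omega
    have e : N - k = (N - (k+1)) + 1 := by omega
    calc Nat.factorial N ≤ Nat.factorial (N - k) * n ^ k := ih hk
      _ = Nat.factorial (N - (k+1)) * (N - k) * n ^ k := by
          rw [e, Nat.factorial_succ, ← e]; ring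
      _ ≤ Nat.factorial (N - (k+1)) * n * n ^ k := by
          have h2 : N - k ≤ n := by omega
          exact Nat.mul_le_mul_right _ (Nat.mul_le_mul_left _ h2)
      _ = Nat.factorial (N - (k+1)) * n ^ (k+1) := by ring

lemma fact_le_Q (β : ℝ) (hβ : 0 < β) (k : ℕ) : (Nat.factorial k : ℝ) ≤ Qprod β k 0 := by
  have h1 : (Nat.factorial k : ℝ) = ∏ i ∈ Finset.range k, ((0 + 1 + i : ℕ) : ℝ) := by
    rw [← Nat.cast_prod]
    congr 1
    induction k with
    | zero => simp
    | succ k ih => rw [Finset.prod_range_succ, ← ih, Nat.factorial_succ]; ring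
  rw [h1, Qprod]
  apply Finset.prod_le_prod
  · intro i _; positivity
  · intro i _; linarith

lemma Qprod_split (β : ℝ) (N k : ℕ) (hk : k ≤ N) :
    Qprod β N 0 = Qprod β k 0 * Qprod β (N - k) k := by
  rw [Qprod, Qprod, Qprod]
  conv_lhs => rw [show N = k + (N - k) by omega, Finset.prod_range_add]
  congr 1
  apply Finset.prod_congr rfl
  intro i _
  have h9 : 0 + 1 + (k + i) = k + 1 + i := by omega
  rw [h9]

lemma rA_le (β : ℝ) (hβ : 0 < β) (m s j k : ℕ) (h1 : s + k ≤ j) (h2 : 1 ≤ m + j) :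
    rA β m s j k * (Nat.factorial k : ℝ) ≤ rA β m s j 0 := by
  set N := j - s with hN
  set d := N - k with hd
  set n := m + j with hn
  have hkN : k ≤ N := by omega
  have hNn : N ≤ n := by omega
  have hnpos : (0:ℝ) < (n:ℝ) := by exact_mod_cast h2
  have hrpow : (0:ℝ) < (n:ℝ) ^ β := Real.rpow_pos_of_pos hnpos β
  have hQd : 0 < Qprod β d k := Qprod_pos β hβ d k
  have hQk : 0 < Qprod β k 0 := Qprod_pos β hβ k 0
  have hdf : (0:ℝ) < (Nat.factorial d : ℝ) := by positivity
  have hNf : (0:ℝ) < (Nat.factorial N : ℝ) := by positivity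
  have hnk : (0:ℝ) < (n:ℝ) ^ k := by positivity
  have e0 : j - s - 0 = N := by omega
  have e1 : j - s - k = d := by omega
  rw [rA, rA, e0, e1]
  rw [div_mul_eq_mul_div, div_le_div_iff₀ (by positivity) (by positivity)]
  -- goal: Qprod β d k * k! * (N! * n^β * n^0) ≤ Qprod β N 0 * (d! * n^β * n^k)
  rw [pow_zero, mul_one, Qprod_split β N k hkN]
  have hfq : (Nat.factorial k : ℝ) ≤ Qprod β k 0 := fact_le_Q β hβ k
  have hff : (Nat.factorial N : ℝ) ≤ (Nat.factorial d : ℝ) * (n:ℝ) ^ k := by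
    have := nat_fact_le N n hNn k hkN
    have hcast : ((Nat.factorial (N - k) * n ^ k : ℕ) : ℝ) = (Nat.factorial d : ℝ) * (n:ℝ) ^ k := by
      push_cast [hd]; ring
    calc (Nat.factorial N : ℝ) ≤ ((Nat.factorial (N - k) * n ^ k : ℕ) : ℝ) := by exact_mod_cast this
      _ = _ := hcast
  have key : (Nat.factorial k : ℝ) * (Nat.factorial N : ℝ)
      ≤ Qprod β k 0 * ((Nat.factorial d : ℝ) * (n:ℝ) ^ k) :=
    mul_le_mul hfq hff (by positivity) (by positivity)
  nlinarith [mul_le_mul_of_nonneg_right key (mul_pos hQd hrpow).le]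

lemma rA_tendsto (β : ℝ) (hβ : 0 < β) (m s k : ℕ) :
    Tendsto (fun j => rA β m s j k) atTop (𝓝 (1 / Real.Gamma (β + k + 1))) := by
  set s' : ℝ := β + k with hs'
  have hs'0 : 0 < s' := by positivity
  have hΓpos : 0 < Real.Gamma s' := Real.Gamma_pos_of_pos hs'0
  -- limits of pieces
  have hsub : Tendsto (fun j : ℕ => j - s - k) atTop atTop := by
    have : (fun j : ℕ => j - s - k) = (fun j => j - (s + k)) := funext fun j => by omega
    rw [this]
    exact tendsto_sub_atTop_nat (s + k)
  have hG : Tendsto (fun j : ℕ => Real.GammaSeq s' (j - s - k)) atTop (𝓝 (Real.Gamma s')) :=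
    (Real.GammaSeq_tendsto_Gamma s').comp hsub
  have hnatTop : Tendsto (fun j : ℕ => ((m + j : ℕ) : ℝ)) atTop atTop := by
    have h1 : Tendsto (fun j : ℕ => j + m) atTop atTop := tendsto_add_atTop_nat m
    have h2 : Tendsto (fun j : ℕ => (((j + m : ℕ)) : ℝ)) atTop atTop :=
      Tendsto.comp tendsto_natCast_atTop_atTop h1
    exact h2.congr fun j => by push_cast; ring
  have hC0 : Tendsto (fun j : ℕ => ((m + s + k : ℕ) : ℝ) / ((m + j : ℕ) : ℝ)) atTop (𝓝 0) :=
    tendsto_const_nhds.div_atTop hnatTop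
  have hdn : Tendsto (fun j : ℕ => ((j - s - k : ℕ) : ℝ) / ((m + j : ℕ) : ℝ)) atTop (𝓝 1) := by
    have h1 : Tendsto (fun j : ℕ => 1 - ((m + s + k : ℕ) : ℝ) / ((m + j : ℕ) : ℝ)) atTop (𝓝 1) := by
      have := tendsto_const_nhds (x := (1:ℝ)) (f := atTop (α := ℕ)) |>.sub hC0
      simpa using this
    apply h1.congr'
    filter_upwards [eventually_ge_atTop (s + k + 1)] with j hj
    have hnz : ((m + j : ℕ) : ℝ) ≠ 0 := by
      have : (1:ℕ) ≤ m + j := by omega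
      exact_mod_cast Nat.one_le_iff_ne_zero.1 this
    have hcast : ((j - s - k : ℕ) : ℝ) = ((m + j : ℕ) : ℝ) - ((m + s + k : ℕ) : ℝ) := by
      have h5 : j - s - k = (m + j) - (m + s + k) := by omega
      rw [h5, Nat.cast_sub (by omega)]
    rw [hcast, sub_div, div_self hnz]
  have hrpow : Tendsto (fun j : ℕ => (((j - s - k : ℕ) : ℝ) / ((m + j : ℕ) : ℝ)) ^ s')
      atTop (𝓝 1) := by
    have := hdn.rpow_const (p := s') (Or.inl one_ne_zero)
    simpa [Real.one_rpow] using this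
  have hne : s' * Real.Gamma s' ≠ 0 := by positivity
  have hfrac : Tendsto (fun j : ℕ => 1 / (s' * Real.GammaSeq s' (j - s - k))) atTop
      (𝓝 (1 / (s' * Real.Gamma s'))) :=
    tendsto_const_nhds.div (tendsto_const_nhds.mul hG) hne
  have hmain := hfrac.mul hrpow
  rw [mul_one] at hmain
  have hval : 1 / (s' * Real.Gamma s') = 1 / Real.Gamma (β + k + 1) := by
    rw [show β + (k:ℝ) + 1 = s' + 1 by rw [hs'], Real.Gamma_add_one hs'0.ne']
  rw [hval] at hmain
  apply hmain.congr'
  filter_upwards [eventually_ge_atTop (s + k + 1)] with j hj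
  set d := j - s - k with hd
  have hd1 : 1 ≤ d := by omega
  have hn1 : 1 ≤ m + j := by omega
  have hdpos : (0:ℝ) < (d:ℝ) := by exact_mod_cast hd1
  have hnpos : (0:ℝ) < ((m + j : ℕ) : ℝ) := by exact_mod_cast hn1
  have hQ : 0 < Qprod β d k := Qprod_pos β hβ d k
  have hprod : ∏ i ∈ Finset.range (d + 1), (s' + (i : ℕ)) = s' * Qprod β d k := by
    rw [Finset.prod_range_succ']
    rw [mul_comm]
    congr 1
    · simp
    · apply Finset.prod_congr rfl
      intro i _
      rw [hs']
      push_cast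
      ring
  have hGS : Real.GammaSeq s' d = (d:ℝ) ^ s' * (Nat.factorial d : ℝ) / (s' * Qprod β d k) := by
    rw [Real.GammaSeq, hprod]
  have hdrp : (0:ℝ) < (d:ℝ) ^ s' := Real.rpow_pos_of_pos hdpos s'
  have hnb : ((m + j : ℕ) : ℝ) ^ s' = ((m + j : ℕ) : ℝ) ^ β * ((m + j : ℕ) : ℝ) ^ (k:ℕ) := by
    rw [hs', Real.rpow_add hnpos, Real.rpow_natCast]
  have hdf : (0:ℝ) < (Nat.factorial d : ℝ) := by positivity
  have h6 : s' * Real.GammaSeq s' d = (d:ℝ)^s' * (Nat.factorial d:ℝ) / Qprod β d k := by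
    rw [hGS]; field_simp
  have h7 : (1:ℝ) / (s' * Real.GammaSeq s' d) = Qprod β d k / ((d:ℝ)^s' * (Nat.factorial d:ℝ)) := by
    rw [h6, one_div, inv_div]
  have h8 : (((j - s - k : ℕ):ℝ)/((m+j:ℕ):ℝ))^s'
      = (d:ℝ)^s' / (((m+j:ℕ):ℝ)^β * ((m+j:ℕ):ℝ)^(k:ℕ)) := by
    rw [← hd, Real.div_rpow hdpos.le hnpos.le, hnb]
  rw [h7, h8, rA, ← hd]
  rw [div_mul_div_comm]
  rw [show Qprod β d k * (d:ℝ)^s' = (d:ℝ)^s' * Qprod β d k from mul_comm _ _]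
  rw [show ((d:ℝ)^s' * (Nat.factorial d:ℝ)) * (((m+j:ℕ):ℝ)^β * ((m+j:ℕ):ℝ)^(k:ℕ))
      = (d:ℝ)^s' * ((Nat.factorial d:ℝ) * (((m+j:ℕ):ℝ)^β * ((m+j:ℕ):ℝ)^(k:ℕ))) from by ring]
  rw [mul_div_mul_left _ _ hdrp.ne']
  congr 1
  ring

section Chunk4

lemma cA_tendsto (β : ℝ) (hβ : 0 < β) (m s k : ℕ) :
    Filter.Tendsto (fun j => cA β m s j k) atTop (𝓝 (besselCoef β k)) := by
  have h1 := rA_tendsto β hβ m s k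
  have h2 : Tendsto (fun j => ((rA β m s j k : ℝ) : ℂ)) atTop
      (𝓝 (((1 / Real.Gamma (β + k + 1) : ℝ) : ℂ))) :=
    (Complex.continuous_ofReal.tendsto _).comp h1
  have h3 : Tendsto (fun j => (-1:ℂ)^k * ((rA β m s j k : ℝ) : ℂ) / (Nat.factorial k : ℂ))
      atTop (𝓝 ((-1:ℂ)^k * ((1 / Real.Gamma (β + k + 1) : ℝ) : ℂ) / (Nat.factorial k : ℂ))) :=
    (h2.const_mul _).div_const _
  have hval : (-1:ℂ)^k * ((1 / Real.Gamma (β + k + 1) : ℝ) : ℂ) / (Nat.factorial k : ℂ)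
      = besselCoef β k := by
    rw [besselCoef, gammaC_eq β k]
    have hΓ : Real.Gamma (β + k + 1) ≠ 0 := (gamma_pos_k β (by linarith) k).ne'
    have hΓ' : ((Real.Gamma (β + k + 1) : ℝ) : ℂ) ≠ 0 := by exact_mod_cast hΓ
    have hkf : ((Nat.factorial k : ℕ) : ℂ) ≠ 0 := by
      exact_mod_cast k.factorial_ne_zero
    push_cast
    field_simp
  rw [← hval]
  apply h3.congr'
  filter_upwards [eventually_ge_atTop (s + k + 1)] with j hj
  rw [cA, if_pos ⟨by omega, by omega⟩]

lemma cA_val (β : ℝ) (hβ : 0 < β) (m s : ℕ) (j : ℕ) (hj1 : s ≤ j) (hj2 : 1 ≤ m + j) (z : ℂ) :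
    ((m + j : ℕ) : ℂ) ^ (-(β:ℂ)) * lagC (β:ℂ) ((j:ℤ) - (s:ℤ)) (z / ((m + j : ℕ) : ℂ))
      = ∑' k, cA β m s j k * z ^ k := by
  set N := j - s with hN
  have hns : ¬ ((j:ℤ) - (s:ℤ) < 0) := by omega
  have htn : ((j:ℤ) - (s:ℤ)).toNat = N := by omega
  rw [lagC, if_neg hns, htn]
  rw [tsum_eq_sum (s := Finset.range (N + 1))
    (by
      intro k hk
      rw [Finset.mem_range] at hk
      rw [cA, if_neg (by omega)]
      exact zero_mul _)]
  rw [Finset.mul_sum]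
  apply Finset.sum_congr rfl
  intro k hk
  rw [Finset.mem_range] at hk
  have hkN : k ≤ N := by omega
  rw [cA, if_pos ⟨by omega, hj2⟩]
  have hnpos : (0:ℝ) < ((m + j : ℕ) : ℝ) := by exact_mod_cast hj2
  -- the ℤ-cast index equals the ℕ-cast
  have e0 : ((((j:ℤ) - (s:ℤ)) : ℤ) : ℂ) = ((N : ℕ) : ℂ) := by
    have : (j:ℤ) - (s:ℤ) = ((N : ℕ) : ℤ) := by omega
    rw [this]
    push_cast
    rfl
  rw [e0]
  -- identify the binomial with Qprod
  have hgb : gbinomC (((N:ℕ):ℂ) + (β:ℂ)) (N - k)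
      = (((Qprod β (N - k) k / ((Nat.factorial (N - k) : ℕ) : ℝ)) : ℝ) : ℂ) := by
    rw [gbinomC]
    rw [Finset.prod_congr rfl (fun i (_ : i ∈ Finset.range (N - k)) =>
      (show (((N:ℕ):ℂ) + (β:ℂ) - (i:ℕ)) = ((((N:ℝ) + β - i : ℝ)) : ℂ) by push_cast; ring))]
    rw [← Complex.ofReal_prod]
    rw [prod_reflect β N k hkN]
    rw [Complex.ofReal_div]
    norm_cast
  have hcpow : ((m + j : ℕ) : ℂ) ^ (-(β:ℂ))
      = (((((m + j : ℕ) : ℝ) ^ (-β : ℝ) : ℝ)) : ℂ) := by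
    rw [Complex.ofReal_cpow hnpos.le (-β)]
    push_cast
    rfl
  rw [hcpow, hgb, rA]
  rw [show j - s - k = N - k from by omega]
  have hnne : ((m + j : ℕ) : ℂ) ≠ 0 := by
    exact_mod_cast Nat.one_le_iff_ne_zero.1 hj2
  have hrpne : (((m + j : ℕ) : ℝ) ^ β) ≠ 0 := (Real.rpow_pos_of_pos hnpos β).ne'
  have hkf : ((Nat.factorial k : ℕ) : ℂ) ≠ 0 := by exact_mod_cast k.factorial_ne_zero
  have hdf : ((Nat.factorial (N - k) : ℕ) : ℂ) ≠ 0 := by exact_mod_cast (N - k).factorial_ne_zero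
  rw [Real.rpow_neg hnpos.le, div_pow]
  push_cast
  have hnpos' : (0:ℝ) < (m:ℝ) + (j:ℝ) := by
    have h0 : (0:ℕ) < m + j := hj2
    exact_mod_cast h0
  have hrpC : ((((m:ℝ)+(j:ℝ)) ^ β : ℝ) : ℂ) ≠ 0 :=
    Complex.ofReal_ne_zero.2 (Real.rpow_pos_of_pos hnpos' β).ne'
  have hnneC : ((m:ℂ) + (j:ℂ)) ≠ 0 := by exact_mod_cast hnne
  field_simp [hrpC, hnneC, hkf, hdf]


end Chunk4
section Chunk5

lemma lemA (β : ℝ) (hβ : 0 < β) (m s : ℕ) (R : ℝ) (hR : 0 ≤ R) :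
    TendstoUniformlyOn
      (fun (j : ℕ) (z : ℂ) =>
        ((m + j : ℕ) : ℂ) ^ (-(β:ℂ)) * lagC (β:ℂ) ((j:ℤ) - (s:ℤ)) (z / ((m + j : ℕ) : ℂ)))
      (fun z => besselEntire (β:ℂ) z) atTop (Metric.closedBall 0 R) := by
  obtain ⟨M, hM⟩ : ∃ M, ∀ j, rA β m s j 0 ≤ M := by
    obtain ⟨M, hM⟩ := (rA_tendsto β hβ m s 0).bddAbove_range
    exact ⟨M, fun j => hM (Set.mem_range_self j)⟩
  have hM0 : 0 ≤ M := le_trans (rA_nonneg β hβ m s 0 0) (hM 0)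
  set D : ℕ → ℝ := fun k => M / ((Nat.factorial k : ℝ) * (Nat.factorial k : ℝ)) with hD
  have hfacpos : ∀ k : ℕ, (0:ℝ) < (Nat.factorial k : ℝ) := fun k => by positivity
  have hfac1 : ∀ k : ℕ, (1:ℝ) ≤ (Nat.factorial k : ℝ) := fun k => by
    exact_mod_cast Nat.one_le_iff_ne_zero.2 k.factorial_ne_zero
  have hbound : ∀ j k, ‖cA β m s j k‖ ≤ D k := by
    intro j k
    rw [cA]
    split_ifs with h
    · rw [norm_div, norm_mul, norm_pow, norm_neg, norm_one, one_pow, one_mul]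
      rw [Complex.norm_real, Complex.norm_natCast]
      rw [Real.norm_eq_abs, abs_of_nonneg (rA_nonneg β hβ m s j k)]
      have h3 := rA_le β hβ m s j k h.1 h.2
      have h4 : rA β m s j k ≤ M / (Nat.factorial k : ℝ) := by
        rw [le_div_iff₀ (hfacpos k)]
        exact h3.trans ((hM j))
      rw [hD]
      calc rA β m s j k / (Nat.factorial k : ℝ)
          ≤ (M / (Nat.factorial k : ℝ)) / (Nat.factorial k : ℝ) := by
            exact div_le_div_of_nonneg_right h4 (hfacpos k).le
        _ = M / ((Nat.factorial k : ℝ) * (Nat.factorial k : ℝ)) := by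
            rw [div_div]
    · simp only [norm_zero, hD]
      positivity
  have hsumD : Summable (fun k => D k * R ^ k) := by
    refine Summable.of_nonneg_of_le (fun k => ?_) (fun k => ?_)
      ((Real.summable_pow_div_factorial R).mul_left M)
    · rw [hD]; positivity
    · rw [hD, div_mul_eq_mul_div, mul_div_assoc]
      apply mul_le_mul_of_nonneg_left _ hM0
      exact div_le_div_of_nonneg_left (by positivity) (hfacpos k)
        (by nlinarith [hfac1 k, hfacpos k])
  have h := tannery_uniform hR (fun k => cA_tendsto β hβ m s k) hbound hsumD
  have hfe : (fun z : ℂ => ∑' k, besselCoef β k * z ^ k) = (fun z => besselEntire (β:ℂ) z) :=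
    funext fun z => (besselEntire_eq β z).symm
  rw [hfe] at h
  apply h.congr
  filter_upwards [eventually_ge_atTop (s + 1)] with j hj
  intro z _
  exact (cA_val β hβ m s j (by omega) (by omega) z).symm

lemma lagC_continuous (γ : ℂ) (p : ℕ) : Continuous (fun w : ℂ => lagC γ (p:ℤ) w) := by
  have hns : ¬ ((p:ℤ) < 0) := by omega
  simp only [lagC, if_neg hns]
  apply continuous_finset_sum
  intro k _
  exact ((continuous_const.mul (continuous_pow k)).div_const _)

lemma lemB (γ : ℂ) (p : ℕ) (m : ℕ) (R : ℝ) (hR : 0 ≤ R) :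
    TendstoUniformlyOn (fun (j:ℕ) (z:ℂ) => lagC γ (p:ℤ) (z / ((m+j:ℕ):ℂ)))
      (fun _ => lagC γ (p:ℤ) 0) atTop (Metric.closedBall 0 R) := by
  rw [Metric.tendstoUniformlyOn_iff]
  intro ε hε
  have hcont := (lagC_continuous γ p).continuousAt (x := 0)
  rw [Metric.continuousAt_iff] at hcont
  obtain ⟨δ, hδ0, hδ⟩ := hcont ε hε
  obtain ⟨j₀, hj₀⟩ := exists_nat_gt (R / δ)
  filter_upwards [eventually_ge_atTop (j₀ + 1)] with j hj z hz
  simp only [Metric.mem_closedBall, dist_zero_right] at hz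
  have hn1 : j₀ + 1 ≤ m + j := by omega
  have hnpos : (0:ℝ) < ((m+j:ℕ):ℝ) := by
    have : (0:ℕ) < m + j := by omega
    exact_mod_cast this
  have hlt : ((j₀:ℕ):ℝ) < ((m+j:ℕ):ℝ) := by exact_mod_cast (by omega : j₀ < m + j)
  have hdist : dist (z / ((m+j:ℕ):ℂ)) 0 < δ := by
    rw [dist_zero_right, norm_div, Complex.norm_natCast]
    rw [div_lt_iff₀ hnpos]
    have h3 : R < δ * ((m+j:ℕ):ℝ) := by
      calc R = (R / δ) * δ := by field_simp
        _ < ((j₀:ℝ)) * δ := mul_lt_mul_of_pos_right hj₀ hδ0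
        _ ≤ ((m+j:ℕ):ℝ) * δ := mul_le_mul_of_nonneg_right hlt.le hδ0.le
        _ = δ * ((m+j:ℕ):ℝ) := mul_comm _ _
    linarith
  rw [dist_comm]
  exact hδ hdist

end Chunk5
section Chunk6

lemma gbinom_shift (x : ℂ) (m : ℕ) :
    x * gbinomC (x - 1) m = (x - (m:ℂ)) * gbinomC x m := by
  rw [gbinomC, gbinomC, mul_div_assoc', mul_div_assoc']
  congr 1
  have h1 : ∏ i ∈ Finset.range m, (x - 1 - (i:ℕ)) = ∏ i ∈ Finset.range m, (x - ((i+1:ℕ):ℂ)) := by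
    apply Finset.prod_congr rfl; intro i _; push_cast; ring
  rw [h1]
  have h2 := Finset.prod_range_succ' (fun i : ℕ => x - (i:ℕ)) m
  have h3 := Finset.prod_range_succ (fun i : ℕ => x - (i:ℕ)) m
  calc x * ∏ i ∈ Finset.range m, (x - ((i+1:ℕ):ℂ))
      = (∏ i ∈ Finset.range m, (x - ((i+1:ℕ):ℂ))) * (x - ((0:ℕ):ℂ)) := by
        push_cast; ring
    _ = ∏ i ∈ Finset.range (m+1), (x - (i:ℕ)) := h2.symm
    _ = (∏ i ∈ Finset.range m, (x - (i:ℕ))) * (x - ((m:ℕ):ℂ)) := h3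
    _ = (x - (m:ℂ)) * ∏ i ∈ Finset.range m, (x - (i:ℕ)) := by ring

lemma lagC_zero (γ : ℂ) (p : ℕ) : lagC γ (p:ℤ) 0 = gbinomC ((p:ℂ) + γ) p := by
  have hns : ¬((p:ℤ) < 0) := by omega
  rw [lagC, if_neg hns]
  rw [Finset.sum_eq_single 0]
  · simp
  · intro k _ hkne
    simp [zero_pow hkne]
  · intro h
    exact absurd (Finset.mem_range.2 (by omega)) h


/-- Heine–Mehler type formula for the type II exceptional Laguerre polynomials:
with `n = m + j`, `n^{-α-1} \hat L^{II,α}_{m,n}(z/n)` converges uniformly on compact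
subsets of `ℂ` to `-\binom{m-1-α}{m} z^{-α/2} J_α(2√z)`. -/
theorem xLaguerreII_heine_mehler (m : ℕ) (α : ℝ) (hα : -1 < α) :
    ∀ K : Set ℂ, IsCompact K →
      TendstoUniformlyOn
        (fun (j : ℕ) (z : ℂ) =>
          ((m + j : ℕ) : ℂ) ^ (-(α : ℂ) - 1) * XLagIIC α m j (z / (m + j : ℕ)))
        (fun z => -(gbinomC ((m : ℂ) - 1 - α) m) * besselEntire α z) Filter.atTop K := by

  intro K hK
  obtain ⟨R, hR0, hKR⟩ : ∃ R : ℝ, 0 ≤ R ∧ K ⊆ Metric.closedBall 0 R := by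
    obtain ⟨R, hR⟩ := hK.isBounded.subset_closedBall (0:ℂ)
    exact ⟨max R 0, le_max_right _ _,
      hR.trans (Metric.closedBall_subset_closedBall (le_max_left _ _))⟩
  apply TendstoUniformlyOn.mono _ hKR
  have hα1 : (0:ℝ) < α + 1 := by linarith
  have hα2 : (0:ℝ) < α + 2 := by linarith
  have ec1 : (((α+1 : ℝ)):ℂ) = (α:ℂ)+1 := by push_cast; ring
  have ec2 : (((α+2 : ℝ)):ℂ) = (α:ℂ)+2 := by push_cast; ring
  have H2 := lemA (α+1) hα1 m 0 R hR0
  have H1 := lemA (α+2) hα2 m 1 R hR0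
  simp only [ec1, Nat.cast_zero, sub_zero] at H2
  simp only [ec2, Nat.cast_one] at H1
  have G1 := lemB (-(α:ℂ) - 1) m m R hR0
  have G2 := lemB (-(α:ℂ) - 2) m m R hR0
  obtain ⟨C1, hC1⟩ := besselEntire_bound (α+1) (by linarith) R hR0
  obtain ⟨C2, hC2⟩ := besselEntire_bound (α+2) (by linarith) R hR0
  rw [ec1] at hC1
  rw [ec2] at hC2
  have Tz : TendstoUniformlyOn (fun (_:ℕ) (z:ℂ) => z) (fun z => z) atTop
      (Metric.closedBall 0 R) := tuo_of_eq (fun _ _ _ => rfl)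
  have Tc : TendstoUniformlyOn (fun (_:ℕ) (_:ℂ) => ((m:ℂ) - α - 1))
      (fun _ => ((m:ℂ) - α - 1)) atTop (Metric.closedBall 0 R) := tuo_of_eq (fun _ _ _ => rfl)
  have hzbd : ∀ z ∈ Metric.closedBall (0:ℂ) R, ‖z‖ ≤ R := fun z hz => by
    simpa [Metric.mem_closedBall, dist_zero_right] using hz
  have T1a := tuo_mul_of_bound Tz G1 (Cf := R) (Cg := ‖lagC (-(α:ℂ)-1) (m:ℤ) 0‖)
    hzbd (fun z _ => le_rfl)
  have T1 := tuo_mul_of_bound T1a H1 (Cf := R * ‖lagC (-(α:ℂ)-1) (m:ℤ) 0‖) (Cg := C2)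
    (fun z hz => by
      rw [norm_mul]
      exact mul_le_mul_of_nonneg_right (hzbd z hz) (norm_nonneg _))
    (fun z hz => hC2 z (hzbd z hz))
  have T2a := tuo_mul_of_bound Tc G2 (Cf := ‖(m:ℂ) - α - 1‖) (Cg := ‖lagC (-(α:ℂ)-2) (m:ℤ) 0‖)
    (fun z _ => le_rfl) (fun z _ => le_rfl)
  have T2 := tuo_mul_of_bound T2a H2
    (Cf := ‖(m:ℂ) - α - 1‖ * ‖lagC (-(α:ℂ)-2) (m:ℤ) 0‖) (Cg := C1)
    (fun z _ => by rw [norm_mul]) (fun z hz => hC1 z (hzbd z hz))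
  have SS := T1.add T2
  have final := SS.congr (F' := fun (j : ℕ) (z : ℂ) =>
      ((m + j : ℕ) : ℂ) ^ (-(α : ℂ) - 1) * XLagIIC α m j (z / (m + j : ℕ))) ?_
  · -- identify the limit function
    have hlim : ((fun z : ℂ => z * lagC (-(α:ℂ)-1) (m:ℤ) 0 * besselEntire ((α:ℂ)+2) z)
          + fun z : ℂ => ((m:ℂ) - α - 1) * lagC (-(α:ℂ)-2) (m:ℤ) 0 * besselEntire ((α:ℂ)+1) z)
        = fun z : ℂ => -(gbinomC ((m : ℂ) - 1 - α) m) * besselEntire (α:ℂ) z := by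
      funext z
      simp only [Pi.add_apply]
      have hrec := bessel_rec α hα z
      have hB1 : lagC (-(α:ℂ)-1) (m:ℤ) 0 = gbinomC ((m:ℂ) - 1 - (α:ℂ)) m := by
        rw [lagC_zero]; congr 1; ring
      have hB2 : lagC (-(α:ℂ)-2) (m:ℤ) 0 = gbinomC ((m:ℂ) - 2 - (α:ℂ)) m := by
        rw [lagC_zero]; congr 1; ring
      have hsh := gbinom_shift ((m:ℂ) - α - 1) m
      rw [show (m:ℂ) - α - 1 - 1 = (m:ℂ) - 2 - α by ring] at hsh
      rw [show (m:ℂ) - α - 1 - (m:ℂ) = -α - 1 by ring] at hsh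
      rw [show (m:ℂ) - α - 1 = (m:ℂ) - 1 - α by ring] at hsh
      rw [hB1, hB2]
      linear_combination gbinomC ((m:ℂ) - 1 - α) m * hrec
        + besselEntire ((α:ℂ)+1) z * hsh
    rw [← hlim]
    exact final
  · -- eventual equality of the approximants
    filter_upwards [eventually_ge_atTop 1] with j hj
    intro z _
    have hn0 : ((m+j:ℕ):ℂ) ≠ 0 := by
      exact_mod_cast (by omega : m + j ≠ 0)
    have hcp := Complex.cpow_add (x := ((m+j:ℕ):ℂ)) (-((α:ℂ)+2)) 1 hn0
    rw [Complex.cpow_one] at hcp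
    have e4 : ((m+j:ℕ):ℂ)^(-((α:ℂ)+2)) = ((m+j:ℕ):ℂ)^(-(α:ℂ)-1) * (((m+j:ℕ):ℂ))⁻¹ := by
      rw [show -((α:ℂ)+2) = (-(α:ℂ)-1) + -1 by ring, Complex.cpow_add _ _ hn0,
        Complex.cpow_neg_one]
    have e5 : ((m+j:ℕ):ℂ)^(-((α:ℂ)+1)) = ((m+j:ℕ):ℂ)^(-(α:ℂ)-1) := by
      rw [show -((α:ℂ)+1) = -(α:ℂ)-1 by ring]
    simp only [Pi.add_apply]
    rw [XLagIIC, e4, e5]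
    field_simp
    push_cast
    ring


end Chunk6
end
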